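/- Let p ≥ 2, λ ≥ 0, α ≥ 0, and |η| ≥ |ξ| > λ. Then |𝒱_{α,λ}(ξ) − 𝒱_{α,λ}(η)| ≤ (2/p)||H_{p/2}(η)| − |H_{p/2}(ξ)|| + 4 (|η|−λ)^(p/2)/(p|η|) · |ξ − η|. -/

import Mathlib

open Classical in
noncomputable def Hfun (n : ℕ) (lam γ : ℝ) (ξ : EuclideanSpace ℝ (Fin n)) :
    EuclideanSpace ℝ (Fin n) :=
  if ξ = 0 then 0 else ((max (‖ξ‖ - lam) 0) ^ γ / ‖ξ‖) • ξ

noncomputable def Gfun (p α lam t : ℝ) : ℝ :=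
  ∫ ω in (0:ℝ)..t, ω ^ ((p - 1 + 2 * α) / 2) / (ω + lam) ^ ((1 + 2 * α) / 2)

noncomputable def Vfun (n : ℕ) (p α lam : ℝ) (ξ : EuclideanSpace ℝ (Fin n)) :
    EuclideanSpace ℝ (Fin n) :=
  if lam < ‖ξ‖ then (Gfun p α lam (max (‖ξ‖ - lam) 0) / ‖ξ‖) • ξ else 0

section helpers

open MeasureTheory intervalIntegral

variable {p lam α : ℝ}

private lemma int_nonneg (hlam : 0 ≤ lam) {ω : ℝ} (hω : 0 ≤ ω) :
    0 ≤ ω ^ ((p - 1 + 2 * α) / 2) / (ω + lam) ^ ((1 + 2 * α) / 2) :=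
  div_nonneg (Real.rpow_nonneg hω _) (Real.rpow_nonneg (by linarith) _)

private lemma int_le (hp : 2 ≤ p) (hlam : 0 ≤ lam) (hα : 0 ≤ α) {ω : ℝ} (hω : 0 ≤ ω) :
    ω ^ ((p - 1 + 2 * α) / 2) / (ω + lam) ^ ((1 + 2 * α) / 2) ≤ ω ^ (p / 2 - 1) := by
  rcases eq_or_lt_of_le hω with h | h
  · rw [← h, Real.zero_rpow (by linarith : (0:ℝ) < (p - 1 + 2 * α) / 2).ne', zero_div]
    exact Real.rpow_nonneg le_rfl _
  have h1 : ω ^ ((1 + 2 * α) / 2) ≤ (ω + lam) ^ ((1 + 2 * α) / 2) :=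
    Real.rpow_le_rpow h.le (by linarith) (by positivity)
  have h2 : ω ^ ((p - 1 + 2 * α) / 2) / (ω + lam) ^ ((1 + 2 * α) / 2)
      ≤ ω ^ ((p - 1 + 2 * α) / 2) / ω ^ ((1 + 2 * α) / 2) :=
    div_le_div_of_nonneg_left (Real.rpow_nonneg h.le _) (Real.rpow_pos_of_pos h _) h1
  calc _ ≤ ω ^ ((p - 1 + 2 * α) / 2) / ω ^ ((1 + 2 * α) / 2) := h2
    _ = ω ^ (p / 2 - 1) := by rw [← Real.rpow_sub h]; ring_nf

private lemma int_integrable (hp : 2 ≤ p) (hlam : 0 ≤ lam) (hα : 0 ≤ α) {t : ℝ}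
    (ht : 0 ≤ t) :
    IntervalIntegrable
      (fun ω => ω ^ ((p - 1 + 2 * α) / 2) / (ω + lam) ^ ((1 + 2 * α) / 2))
      MeasureTheory.volume 0 t := by
  apply IntervalIntegrable.mono_fun' (g := fun ω => ω ^ (p / 2 - 1))
  · exact intervalIntegral.intervalIntegrable_rpow (by left; linarith)
  · exact ((Real.continuous_rpow_const (by linarith)).measurable.div
      (((continuous_id.add continuous_const).rpow_const
        (fun x => Or.inr (by linarith))).measurable)).aestronglyMeasurable
  · filter_upwards [MeasureTheory.ae_restrict_mem measurableSet_uIoc] with ω hω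
    rw [Set.uIoc_of_le ht] at hω
    rw [Real.norm_eq_abs, abs_of_nonneg (int_nonneg hlam hω.1.le)]
    exact int_le hp hlam hα hω.1.le

private lemma G_diff_bounds (hp : 2 ≤ p) (hlam : 0 ≤ lam) (hα : 0 ≤ α) {a b : ℝ}
    (ha : 0 ≤ a) (hab : a ≤ b) :
    0 ≤ Gfun p α lam b - Gfun p α lam a ∧
      Gfun p α lam b - Gfun p α lam a ≤ 2 / p * (b ^ (p / 2) - a ^ (p / 2)) := by
  have hb : (0:ℝ) ≤ b := ha.trans hab
  have hIa := int_integrable hp hlam hα ha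
  have hIb := int_integrable hp hlam hα hb
  have hdiff : Gfun p α lam b - Gfun p α lam a =
      ∫ ω in a..b, ω ^ ((p - 1 + 2 * α) / 2) / (ω + lam) ^ ((1 + 2 * α) / 2) :=
    intervalIntegral.integral_interval_sub_left hIb hIa
  have hIab : IntervalIntegrable
      (fun ω => ω ^ ((p - 1 + 2 * α) / 2) / (ω + lam) ^ ((1 + 2 * α) / 2))
      MeasureTheory.volume a b := hIb.mono_set' (by
        rw [Set.uIoc_of_le hab, Set.uIoc_of_le hb]
        exact Set.Ioc_subset_Ioc ha le_rfl)
  constructor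
  · rw [hdiff]
    exact intervalIntegral.integral_nonneg hab fun ω hω => int_nonneg hlam (ha.trans hω.1)
  · rw [hdiff]
    have hg : IntervalIntegrable (fun ω : ℝ => ω ^ (p / 2 - 1))
        MeasureTheory.volume a b :=
      intervalIntegral.intervalIntegrable_rpow (by left; linarith)
    have hmono := intervalIntegral.integral_mono_on hab hIab hg
      (fun ω hω => int_le hp hlam hα (ha.trans hω.1))
    have hval : ∫ ω in a..b, ω ^ (p / 2 - 1) = (b ^ (p / 2) - a ^ (p / 2)) / (p / 2) := by
      rw [integral_rpow (Or.inl (by linarith))]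
      ring_nf
    rw [hval] at hmono
    have hp0 : 0 < p := by linarith
    calc _ ≤ (b ^ (p / 2) - a ^ (p / 2)) / (p / 2) := hmono
      _ = 2 / p * (b ^ (p / 2) - a ^ (p / 2)) := by field_simp

private lemma unit_diff_le {n : ℕ} (ξ η : EuclideanSpace ℝ (Fin n))
    (hr : 0 < ‖ξ‖) (hrs : ‖ξ‖ ≤ ‖η‖) :
    ‖(1 / ‖ξ‖) • ξ - (1 / ‖η‖) • η‖ ≤ 2 / ‖η‖ * ‖ξ - η‖ := by
  have hs : 0 < ‖η‖ := lt_of_lt_of_le hr hrs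
  have hid : (1 / ‖ξ‖) • ξ - (1 / ‖η‖) • η
      = (1 / ‖η‖) • (ξ - η) + (1 / ‖ξ‖ - 1 / ‖η‖) • ξ := by
    rw [smul_sub, sub_smul]; abel
  have hco : 0 ≤ 1 / ‖ξ‖ - 1 / ‖η‖ := by
    rw [sub_nonneg]
    exact one_div_le_one_div_of_le hr hrs
  have hnd : ‖η‖ - ‖ξ‖ ≤ ‖ξ - η‖ := by
    have := abs_norm_sub_norm_le η ξ
    rw [← norm_neg (η - ξ), neg_sub] at this
    calc ‖η‖ - ‖ξ‖ ≤ |‖η‖ - ‖ξ‖| := le_abs_self _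
      _ ≤ ‖ξ - η‖ := this
  calc ‖(1 / ‖ξ‖) • ξ - (1 / ‖η‖) • η‖
      ≤ ‖(1 / ‖η‖) • (ξ - η)‖ + ‖(1 / ‖ξ‖ - 1 / ‖η‖) • ξ‖ := by
        rw [hid]; exact norm_add_le _ _
    _ = (1 / ‖η‖) * ‖ξ - η‖ + (1 / ‖ξ‖ - 1 / ‖η‖) * ‖ξ‖ := by
        rw [norm_smul, norm_smul, Real.norm_eq_abs, Real.norm_eq_abs,
          abs_of_nonneg (by positivity), abs_of_nonneg hco]
    _ ≤ (1 / ‖η‖) * ‖ξ - η‖ + (1 / ‖η‖) * ‖ξ - η‖ := by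
        gcongr ?_ + ?_
        · exact le_rfl
        · have : (1 / ‖ξ‖ - 1 / ‖η‖) * ‖ξ‖ = (‖η‖ - ‖ξ‖) / ‖η‖ := by
            field_simp
          rw [this]
          rw [div_le_iff₀ hs]
          calc ‖η‖ - ‖ξ‖ ≤ ‖ξ - η‖ := hnd
            _ ≤ 1 / ‖η‖ * ‖ξ - η‖ * ‖η‖ := by
              rw [mul_comm (1 / ‖η‖), mul_assoc, one_div, inv_mul_cancel₀ hs.ne', mul_one]
    _ = 2 / ‖η‖ * ‖ξ - η‖ := by ring

end helpers

theorem V_diff_intermediate_bound (n : ℕ) (p lam α : ℝ) (hp : 2 ≤ p) (hlam : 0 ≤ lam)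
    (hα : 0 ≤ α) (ξ η : EuclideanSpace ℝ (Fin n)) (h1 : ‖ξ‖ ≤ ‖η‖) (h2 : lam < ‖ξ‖) :
    ‖Vfun n p α lam ξ - Vfun n p α lam η‖ ≤
      (2 / p) * |‖Hfun n lam (p / 2) η‖ - ‖Hfun n lam (p / 2) ξ‖| +
        4 * (‖η‖ - lam) ^ (p / 2) / (p * ‖η‖) * ‖ξ - η‖ := by
  have hs2 : lam < ‖η‖ := lt_of_lt_of_le h2 h1
  have hr : 0 < ‖ξ‖ := lt_of_le_of_lt hlam h2
  have hs : 0 < ‖η‖ := lt_of_le_of_lt hlam hs2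
  have hξ0 : ξ ≠ 0 := by simpa [norm_pos_iff] using hr
  have hη0 : η ≠ 0 := by simpa [norm_pos_iff] using hs
  set r := ‖ξ‖ with hrdef
  set s := ‖η‖ with hsdef
  have hmaxξ : max (r - lam) 0 = r - lam := max_eq_left (by linarith)
  have hmaxη : max (s - lam) 0 = s - lam := max_eq_left (by linarith)
  set a := r - lam with hadef
  set b := s - lam with hbdef
  have ha : 0 < a := by simp [hadef]; linarith
  have hab : a ≤ b := by simp [hadef, hbdef]; linarith
  have hb : 0 < b := lt_of_lt_of_le ha hab
  set Ga := Gfun p α lam a with hGa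
  set Gb := Gfun p α lam b with hGb
  obtain ⟨hGnn, hGle⟩ := G_diff_bounds hp hlam hα ha.le hab
  obtain ⟨hGb0, hGble⟩ := G_diff_bounds hp hlam hα (le_refl (0:ℝ)) hb.le
  have hG0 : Gfun p α lam 0 = 0 := by simp [Gfun]
  rw [hG0, sub_zero] at hGb0 hGble
  rw [Real.zero_rpow (by positivity), sub_zero] at hGble
  -- norms of Hfun
  have hHξ : ‖Hfun n lam (p / 2) ξ‖ = a ^ (p / 2) := by
    rw [Hfun, if_neg hξ0, hmaxξ, norm_smul, Real.norm_eq_abs,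
      abs_of_nonneg (by positivity), div_mul_cancel₀]
    exact hr.ne'
  have hHη : ‖Hfun n lam (p / 2) η‖ = b ^ (p / 2) := by
    rw [Hfun, if_neg hη0, hmaxη, norm_smul, Real.norm_eq_abs,
      abs_of_nonneg (by positivity), div_mul_cancel₀]
    exact hs.ne'
  have hpow : a ^ (p / 2) ≤ b ^ (p / 2) :=
    Real.rpow_le_rpow ha.le hab (by positivity)
  -- unfold Vfun
  rw [Vfun, Vfun, if_pos h2, if_pos hs2, hmaxξ, hmaxη]
  rw [← hGa, ← hGb] at hGnn hGle
  rw [← hGb] at hGb0 hGble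
  show ‖(Ga / r) • ξ - (Gb / s) • η‖ ≤ _
  have hid : (Ga / r) • ξ - (Gb / s) • η
      = ((Ga - Gb) / r) • ξ + Gb • ((1 / r) • ξ - (1 / s) • η) := by
    have hco : Ga / r = (Ga - Gb) / r + Gb * (1 / r) := by field_simp; ring
    rw [smul_sub, smul_smul, smul_smul, mul_one_div Gb s, hco, add_smul,
      mul_one_div Gb r]
    abel
  rw [hid]
  have hterm1 : ‖((Ga - Gb) / r) • ξ‖ = Gb - Ga := by
    rw [norm_smul, Real.norm_eq_abs, abs_div, abs_of_nonneg hr.le, ← hrdef,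
      div_mul_cancel₀ _ hr.ne', abs_of_nonpos (by linarith), neg_sub]
  have hterm2 : ‖Gb • ((1 / r) • ξ - (1 / s) • η)‖ ≤ Gb * (2 / s * ‖ξ - η‖) := by
    rw [norm_smul, Real.norm_eq_abs, abs_of_nonneg hGb0]
    exact mul_le_mul_of_nonneg_left (unit_diff_le ξ η hr h1) hGb0
  calc ‖((Ga - Gb) / r) • ξ + Gb • ((1 / r) • ξ - (1 / s) • η)‖
      ≤ ‖((Ga - Gb) / r) • ξ‖ + ‖Gb • ((1 / r) • ξ - (1 / s) • η)‖ := norm_add_le _ _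
    _ ≤ (Gb - Ga) + Gb * (2 / s * ‖ξ - η‖) := by rw [hterm1]; gcongr
    _ ≤ 2 / p * (b ^ (p / 2) - a ^ (p / 2))
        + (2 / p * b ^ (p / 2)) * (2 / s * ‖ξ - η‖) := by
        exact add_le_add hGle (mul_le_mul_of_nonneg_right hGble (by positivity))
    _ ≤ (2 / p) * |‖Hfun n lam (p / 2) η‖ - ‖Hfun n lam (p / 2) ξ‖|
        + 4 * b ^ (p / 2) / (p * s) * ‖ξ - η‖ := by
        rw [hHξ, hHη, abs_of_nonneg (by linarith)]
        apply add_le_add le_rfl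
        have hp0 : 0 < p := by linarith
        rw [show (2 / p * b ^ (p / 2)) * (2 / s * ‖ξ - η‖)
            = 4 * b ^ (p / 2) / (p * s) * ‖ξ - η‖ by field_simp; ring]
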